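/- Offline performance bound in total-variation form (corrected intermediate form of Theorem 4): for two transition kernels P_src, P_tar and two policies π_D (the empirical behavior policy of the offline source dataset) and π on the same finite state and action spaces (same reward, discount, and initial distribution), J[P_tar](π) − J[P_src](π) ≥ −(4·r_max/(1−γ)²) · Σ_s ν[P_src,π_D](s) · D_TV( π_D(s), π(s) ) − (2γ·r_max/(1−γ)²) · Σ_{(s,a)} ρ[P_src,π_D](s,a) · D_TV( P_src(s,a), P_tar(s,a) ). -/
import Mathlib


open Real

noncomputable section

variable {S A : Type*} [Fintype S] [Fintype A]

/-- Time-`t` state-action distribution `d_t[P,pol]` started from the initial state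
distribution `ρ0`:  `d_0(s,a) = ρ0(s)·pol(s)(a)` and
`d_{t+1}(s',a') = Σ_{(s,a)} d_t(s,a)·P(s,a)(s')·pol(s')(a')`. -/
def dDist (P : S → A → PMF S) (pol : S → PMF A) (ρ0 : PMF S) : ℕ → S × A → ℝ
  | 0 => fun p => (ρ0 p.1).toReal * (pol p.1 p.2).toReal
  | (t + 1) => fun p' =>
      ∑ p : S × A, dDist P pol ρ0 t p * (P p.1 p.2 p'.1).toReal * (pol p'.1 p'.2).toReal

/-- Normalized state-action occupancy `ρ[P,pol](s,a) = (1−γ)·Σ_t γ^t·d_t[P,pol](s,a)`. -/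
def occ (P : S → A → PMF S) (pol : S → PMF A) (ρ0 : PMF S) (γ : ℝ) (p : S × A) : ℝ :=
  (1 - γ) * ∑' t : ℕ, γ ^ t * dDist P pol ρ0 t p

/-- Normalized state occupancy `ν[P,pol](s) = Σ_a ρ[P,pol](s,a)`. -/
def stateOcc (P : S → A → PMF S) (pol : S → PMF A) (ρ0 : PMF S) (γ : ℝ) (s : S) : ℝ :=
  ∑ a : A, occ P pol ρ0 γ (s, a)

/-- Expected discounted return `J[P](pol) = Σ_t γ^t Σ_{(s,a)} d_t[P,pol](s,a)·r(s,a)`. -/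
def Jret (P : S → A → PMF S) (pol : S → PMF A) (ρ0 : PMF S) (r : S → A → ℝ) (γ : ℝ) : ℝ :=
  ∑' t : ℕ, γ ^ t * ∑ p : S × A, dDist P pol ρ0 t p * r p.1 p.2

/-- Value function `V[P,pol](s)`: the return with the recursion started from the point
distribution at `s` (i.e. `d_0(s',a) = 1[s'=s]·pol(s')(a)`). -/
def Vval (P : S → A → PMF S) (pol : S → PMF A) (r : S → A → ℝ) (γ : ℝ) (s : S) : ℝ :=
  Jret P pol (PMF.pure s) r γ

/-- Action-value function `Q[P,pol](s,a) = r(s,a) + γ·Σ_{s'} P(s,a)(s')·V[P,pol](s')`. -/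
def Qval (P : S → A → PMF S) (pol : S → PMF A) (r : S → A → ℝ) (γ : ℝ) (s : S) (a : A) : ℝ :=
  r s a + γ * ∑ s' : S, (P s a s').toReal * Vval P pol r γ s'

/-- Total variation distance between two pmfs on a finite type:
`D_TV(p,q) = (1/2)·Σ_x |p(x) − q(x)|`. -/
def dTV {X : Type*} [Fintype X] (p q : PMF X) : ℝ :=
  (1 / 2) * ∑ x : X, |(p x).toReal - (q x).toReal|

/-- Kullback–Leibler divergence between two pmfs on a finite type (with `q` everywhere
positive): `D_KL(p‖q) = Σ_x p(x)·log(p(x)/q(x))`, with the convention `0·log 0 = 0`. -/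
def dKL {X : Type*} [Fintype X] (p q : PMF X) : ℝ :=
  ∑ x : X, (p x).toReal * Real.log ((p x).toReal / (q x).toReal)

/-- Shannon entropy of a pmf on a finite type, `H(p) = −Σ_x p(x)·log p(x)`,
with the convention `0·log 0 = 0`. -/
def entropyPMF {X : Type*} [Fintype X] (p : PMF X) : ℝ :=
  - ∑ x : X, (p x).toReal * Real.log (p x).toReal

end

noncomputable section AuxProof

variable {S A : Type*} [Fintype S] [Fintype A]

lemma sum_pmf_toReal {X : Type*} [Fintype X] (p : PMF X) :
    ∑ x : X, (p x).toReal = 1 := by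
  have h := p.tsum_coe
  rw [tsum_fintype] at h
  rw [← ENNReal.toReal_sum (fun x _ => p.apply_ne_top x), h, ENNReal.toReal_one]

lemma sum_prod_pol (h : S → ℝ) (po : S → PMF A) :
    ∑ p : S × A, h p.1 * (po p.1 p.2).toReal = ∑ s : S, h s := by
  rw [Fintype.sum_prod_type]
  simp only [← Finset.mul_sum, sum_pmf_toReal, mul_one]

lemma dDist_nonneg (P : S → A → PMF S) (pol : S → PMF A) (ρ0 : PMF S) (t : ℕ) (p : S × A) :
    0 ≤ dDist P pol ρ0 t p := by
  induction t generalizing p with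
  | zero => exact mul_nonneg ENNReal.toReal_nonneg ENNReal.toReal_nonneg
  | succ t ih =>
      exact Finset.sum_nonneg fun q _ =>
        mul_nonneg (mul_nonneg (ih q) ENNReal.toReal_nonneg) ENNReal.toReal_nonneg

lemma kernel_pol_sum (q : PMF S) (po : S → PMF A) :
    ∑ p' : S × A, (q p'.1).toReal * (po p'.1 p'.2).toReal = 1 :=
  (sum_prod_pol (fun s => (q s).toReal) po).trans (sum_pmf_toReal q)

lemma dDist_sum_one (P : S → A → PMF S) (pol : S → PMF A) (ρ0 : PMF S) (t : ℕ) :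
    ∑ p : S × A, dDist P pol ρ0 t p = 1 := by
  induction t with
  | zero =>
      show ∑ p : S × A, (ρ0 p.1).toReal * (pol p.1 p.2).toReal = 1
      exact kernel_pol_sum ρ0 pol
  | succ t ih =>
      show ∑ p' : S × A, ∑ p : S × A,
          dDist P pol ρ0 t p * (P p.1 p.2 p'.1).toReal * (pol p'.1 p'.2).toReal = 1
      rw [Finset.sum_comm]
      calc ∑ p : S × A, ∑ p' : S × A,
              dDist P pol ρ0 t p * (P p.1 p.2 p'.1).toReal * (pol p'.1 p'.2).toReal
          = ∑ p : S × A, dDist P pol ρ0 t p *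
              ∑ p' : S × A, (P p.1 p.2 p'.1).toReal * (pol p'.1 p'.2).toReal := by
            simp only [mul_assoc, ← Finset.mul_sum]
        _ = ∑ p : S × A, dDist P pol ρ0 t p := by
            simp only [kernel_pol_sum, mul_one]
        _ = 1 := ih

lemma dDist_le_one (P : S → A → PMF S) (pol : S → PMF A) (ρ0 : PMF S) (t : ℕ) (p : S × A) :
    dDist P pol ρ0 t p ≤ 1 := by
  have h := dDist_sum_one P pol ρ0 t
  have := Finset.single_le_sum (f := fun q => dDist P pol ρ0 t q)
    (fun q _ => dDist_nonneg P pol ρ0 t q) (Finset.mem_univ p)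
  linarith

lemma dDist_marginal (P : S → A → PMF S) (pol : S → PMF A) (ρ0 : PMF S) (t : ℕ) (s' : S) :
    ∑ a : A, dDist P pol ρ0 (t + 1) (s', a) =
      ∑ p : S × A, dDist P pol ρ0 t p * (P p.1 p.2 s').toReal := by
  show ∑ a : A, ∑ p : S × A,
      dDist P pol ρ0 t p * (P p.1 p.2 s').toReal * (pol s' a).toReal = _
  rw [Finset.sum_comm]
  calc ∑ p : S × A, ∑ a : A,
          dDist P pol ρ0 t p * (P p.1 p.2 s').toReal * (pol s' a).toReal
      = ∑ p : S × A, dDist P pol ρ0 t p * (P p.1 p.2 s').toReal *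
          ∑ a : A, (pol s' a).toReal := by
        simp only [← Finset.mul_sum]
    _ = _ := by simp only [sum_pmf_toReal, mul_one]

/-- L1 distance between the two time-`t` distributions. -/
def Ef (P Q : S → A → PMF S) (mu po : S → PMF A) (ρ0 : PMF S) (t : ℕ) : ℝ :=
  ∑ p : S × A, |dDist Q po ρ0 t p - dDist P mu ρ0 t p|

/-- Expected (under `d_t[P,mu]`) L1 distance between kernels. -/
def Bf (P Q : S → A → PMF S) (mu : S → PMF A) (ρ0 : PMF S) (t : ℕ) : ℝ :=
  ∑ p : S × A, dDist P mu ρ0 t p *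
    ∑ s' : S, |(Q p.1 p.2 s').toReal - (P p.1 p.2 s').toReal|

/-- Expected (under the state marginal of `d_t[P,mu]`) L1 distance between policies. -/
def Cf (P : S → A → PMF S) (mu po : S → PMF A) (ρ0 : PMF S) (t : ℕ) : ℝ :=
  ∑ s : S, (∑ a : A, dDist P mu ρ0 t (s, a)) *
    ∑ a' : A, |(po s a').toReal - (mu s a').toReal|

lemma Ef_nonneg (P Q : S → A → PMF S) (mu po : S → PMF A) (ρ0 : PMF S) (t : ℕ) :
    0 ≤ Ef P Q mu po ρ0 t :=
  Finset.sum_nonneg fun p _ => abs_nonneg _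

lemma Ef_le_two (P Q : S → A → PMF S) (mu po : S → PMF A) (ρ0 : PMF S) (t : ℕ) :
    Ef P Q mu po ρ0 t ≤ 2 := by
  have h : Ef P Q mu po ρ0 t ≤
      ∑ p : S × A, (dDist Q po ρ0 t p + dDist P mu ρ0 t p) := by
    refine Finset.sum_le_sum fun p _ => ?_
    have h1 := dDist_nonneg Q po ρ0 t p
    have h2 := dDist_nonneg P mu ρ0 t p
    rw [abs_le]; constructor <;> linarith
  rw [Finset.sum_add_distrib, dDist_sum_one, dDist_sum_one] at h
  linarith

lemma pmf_l1_le_two {X : Type*} [Fintype X] (p q : PMF X) :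
    ∑ x : X, |(p x).toReal - (q x).toReal| ≤ 2 := by
  have h : ∑ x : X, |(p x).toReal - (q x).toReal| ≤
      ∑ x : X, ((p x).toReal + (q x).toReal) := by
    refine Finset.sum_le_sum fun x _ => ?_
    have h1 : (0:ℝ) ≤ (p x).toReal := ENNReal.toReal_nonneg
    have h2 : (0:ℝ) ≤ (q x).toReal := ENNReal.toReal_nonneg
    rw [abs_le]; constructor <;> linarith
  rw [Finset.sum_add_distrib, sum_pmf_toReal, sum_pmf_toReal] at h
  linarith

lemma Bf_nonneg (P Q : S → A → PMF S) (mu : S → PMF A) (ρ0 : PMF S) (t : ℕ) :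
    0 ≤ Bf P Q mu ρ0 t :=
  Finset.sum_nonneg fun p _ => mul_nonneg (dDist_nonneg P mu ρ0 t p)
    (Finset.sum_nonneg fun _ _ => abs_nonneg _)

lemma Bf_le_two (P Q : S → A → PMF S) (mu : S → PMF A) (ρ0 : PMF S) (t : ℕ) :
    Bf P Q mu ρ0 t ≤ 2 := by
  have h : Bf P Q mu ρ0 t ≤ ∑ p : S × A, dDist P mu ρ0 t p * 2 := by
    refine Finset.sum_le_sum fun p _ => ?_
    exact mul_le_mul_of_nonneg_left (pmf_l1_le_two _ _) (dDist_nonneg P mu ρ0 t p)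
  rw [← Finset.sum_mul, dDist_sum_one, one_mul] at h
  exact h

lemma Bf_self (P : S → A → PMF S) (mu : S → PMF A) (ρ0 : PMF S) (t : ℕ) :
    Bf P P mu ρ0 t = 0 := by
  simp [Bf]

lemma marginal_nonneg (P : S → A → PMF S) (mu : S → PMF A) (ρ0 : PMF S) (t : ℕ) (s : S) :
    0 ≤ ∑ a : A, dDist P mu ρ0 t (s, a) :=
  Finset.sum_nonneg fun a _ => dDist_nonneg P mu ρ0 t (s, a)

lemma marginal_sum_one (P : S → A → PMF S) (mu : S → PMF A) (ρ0 : PMF S) (t : ℕ) :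
    ∑ s : S, ∑ a : A, dDist P mu ρ0 t (s, a) = 1 := by
  rw [← Fintype.sum_prod_type]; exact dDist_sum_one P mu ρ0 t

lemma Cf_nonneg (P : S → A → PMF S) (mu po : S → PMF A) (ρ0 : PMF S) (t : ℕ) :
    0 ≤ Cf P mu po ρ0 t :=
  Finset.sum_nonneg fun s _ => mul_nonneg (marginal_nonneg P mu ρ0 t s)
    (Finset.sum_nonneg fun _ _ => abs_nonneg _)

lemma Cf_le_two (P : S → A → PMF S) (mu po : S → PMF A) (ρ0 : PMF S) (t : ℕ) :
    Cf P mu po ρ0 t ≤ 2 := by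
  have h : Cf P mu po ρ0 t ≤ ∑ s : S, (∑ a : A, dDist P mu ρ0 t (s, a)) * 2 := by
    refine Finset.sum_le_sum fun s _ => ?_
    exact mul_le_mul_of_nonneg_left (pmf_l1_le_two _ _) (marginal_nonneg P mu ρ0 t s)
  rw [← Finset.sum_mul, marginal_sum_one, one_mul] at h
  exact h

lemma Ef_zero_eq (P Q : S → A → PMF S) (mu po : S → PMF A) (ρ0 : PMF S) :
    Ef P Q mu po ρ0 0 = Cf P mu po ρ0 0 := by
  unfold Ef Cf
  have h : ∀ p : S × A,
      |dDist Q po ρ0 0 p - dDist P mu ρ0 0 p| =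
        (ρ0 p.1).toReal * |(po p.1 p.2).toReal - (mu p.1 p.2).toReal| := by
    intro p
    show |(ρ0 p.1).toReal * (po p.1 p.2).toReal - (ρ0 p.1).toReal * (mu p.1 p.2).toReal| = _
    rw [← mul_sub, abs_mul, abs_of_nonneg ENNReal.toReal_nonneg]
  simp only [h]
  rw [Fintype.sum_prod_type]
  refine Finset.sum_congr rfl fun s _ => ?_
  have hm : ∑ a : A, dDist P mu ρ0 0 (s, a) = (ρ0 s).toReal := by
    show ∑ a : A, (ρ0 s).toReal * (mu s a).toReal = _
    rw [← Finset.mul_sum, sum_pmf_toReal, mul_one]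
  rw [hm, Finset.mul_sum]

lemma Ef_succ_le (P Q : S → A → PMF S) (mu po : S → PMF A) (ρ0 : PMF S) (t : ℕ) :
    Ef P Q mu po ρ0 (t + 1) ≤ Ef P Q mu po ρ0 t + Bf P Q mu ρ0 t + Cf P mu po ρ0 (t + 1) := by
  set f := dDist Q po ρ0 t with hf
  set g := dDist P mu ρ0 t with hg
  have key : ∀ p' : S × A,
      |dDist Q po ρ0 (t + 1) p' - dDist P mu ρ0 (t + 1) p'| ≤
        ∑ p : S × A,
          (|f p - g p| * (Q p.1 p.2 p'.1).toReal * (po p'.1 p'.2).toReal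
           + g p * |(Q p.1 p.2 p'.1).toReal - (P p.1 p.2 p'.1).toReal| * (po p'.1 p'.2).toReal
           + g p * (P p.1 p.2 p'.1).toReal * |(po p'.1 p'.2).toReal - (mu p'.1 p'.2).toReal|) := by
    intro p'
    have h1 : dDist Q po ρ0 (t + 1) p' - dDist P mu ρ0 (t + 1) p' =
        ∑ p : S × A,
          ((f p - g p) * (Q p.1 p.2 p'.1).toReal * (po p'.1 p'.2).toReal
           + g p * ((Q p.1 p.2 p'.1).toReal - (P p.1 p.2 p'.1).toReal) * (po p'.1 p'.2).toReal
           + g p * (P p.1 p.2 p'.1).toReal * ((po p'.1 p'.2).toReal - (mu p'.1 p'.2).toReal)) := by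
      show (∑ p : S × A, f p * (Q p.1 p.2 p'.1).toReal * (po p'.1 p'.2).toReal)
          - (∑ p : S × A, g p * (P p.1 p.2 p'.1).toReal * (mu p'.1 p'.2).toReal) = _
      rw [← Finset.sum_sub_distrib]
      exact Finset.sum_congr rfl fun p _ => by ring
    rw [h1]
    refine (Finset.abs_sum_le_sum_abs _ _).trans (Finset.sum_le_sum fun p _ => ?_)
    have hg0 : 0 ≤ g p := dDist_nonneg P mu ρ0 t p
    have e1 : |(f p - g p) * (Q p.1 p.2 p'.1).toReal * (po p'.1 p'.2).toReal| =
        |f p - g p| * (Q p.1 p.2 p'.1).toReal * (po p'.1 p'.2).toReal := by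
      rw [abs_mul, abs_mul, abs_of_nonneg (ENNReal.toReal_nonneg),
        abs_of_nonneg (ENNReal.toReal_nonneg)]
    have e2 : |g p * ((Q p.1 p.2 p'.1).toReal - (P p.1 p.2 p'.1).toReal) * (po p'.1 p'.2).toReal| =
        g p * |(Q p.1 p.2 p'.1).toReal - (P p.1 p.2 p'.1).toReal| * (po p'.1 p'.2).toReal := by
      rw [abs_mul, abs_mul, abs_of_nonneg hg0, abs_of_nonneg (ENNReal.toReal_nonneg)]
    have e3 : |g p * (P p.1 p.2 p'.1).toReal * ((po p'.1 p'.2).toReal - (mu p'.1 p'.2).toReal)| =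
        g p * (P p.1 p.2 p'.1).toReal * |(po p'.1 p'.2).toReal - (mu p'.1 p'.2).toReal| := by
      rw [abs_mul, abs_mul, abs_of_nonneg hg0, abs_of_nonneg (ENNReal.toReal_nonneg)]
    calc |_ + _ + _| ≤ _ + _ + _ := abs_add_three _ _ _
      _ = _ := by rw [e1, e2, e3]
  have hE : Ef P Q mu po ρ0 (t + 1) ≤
      ∑ p' : S × A, ∑ p : S × A,
        (|f p - g p| * (Q p.1 p.2 p'.1).toReal * (po p'.1 p'.2).toReal
         + g p * |(Q p.1 p.2 p'.1).toReal - (P p.1 p.2 p'.1).toReal| * (po p'.1 p'.2).toReal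
         + g p * (P p.1 p.2 p'.1).toReal * |(po p'.1 p'.2).toReal - (mu p'.1 p'.2).toReal|) :=
    Finset.sum_le_sum fun p' _ => key p'
  have split : ∑ p' : S × A, ∑ p : S × A,
        (|f p - g p| * (Q p.1 p.2 p'.1).toReal * (po p'.1 p'.2).toReal
         + g p * |(Q p.1 p.2 p'.1).toReal - (P p.1 p.2 p'.1).toReal| * (po p'.1 p'.2).toReal
         + g p * (P p.1 p.2 p'.1).toReal * |(po p'.1 p'.2).toReal - (mu p'.1 p'.2).toReal|)
      = (∑ p' : S × A, ∑ p : S × A,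
          |f p - g p| * (Q p.1 p.2 p'.1).toReal * (po p'.1 p'.2).toReal)
        + (∑ p' : S × A, ∑ p : S × A,
          g p * |(Q p.1 p.2 p'.1).toReal - (P p.1 p.2 p'.1).toReal| * (po p'.1 p'.2).toReal)
        + (∑ p' : S × A, ∑ p : S × A,
          g p * (P p.1 p.2 p'.1).toReal * |(po p'.1 p'.2).toReal - (mu p'.1 p'.2).toReal|) := by
    simp only [Finset.sum_add_distrib]
  have T1 : (∑ p' : S × A, ∑ p : S × A,
      |f p - g p| * (Q p.1 p.2 p'.1).toReal * (po p'.1 p'.2).toReal) = Ef P Q mu po ρ0 t := by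
    rw [Finset.sum_comm]
    calc ∑ p : S × A, ∑ p' : S × A,
            |f p - g p| * (Q p.1 p.2 p'.1).toReal * (po p'.1 p'.2).toReal
        = ∑ p : S × A, |f p - g p| *
            ∑ p' : S × A, (Q p.1 p.2 p'.1).toReal * (po p'.1 p'.2).toReal := by
          simp only [mul_assoc, ← Finset.mul_sum]
      _ = ∑ p : S × A, |f p - g p| := by simp only [kernel_pol_sum, mul_one]
      _ = Ef P Q mu po ρ0 t := rfl
  have T2 : (∑ p' : S × A, ∑ p : S × A,
      g p * |(Q p.1 p.2 p'.1).toReal - (P p.1 p.2 p'.1).toReal| * (po p'.1 p'.2).toReal)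
      = Bf P Q mu ρ0 t := by
    rw [Finset.sum_comm]
    calc ∑ p : S × A, ∑ p' : S × A,
            g p * |(Q p.1 p.2 p'.1).toReal - (P p.1 p.2 p'.1).toReal| * (po p'.1 p'.2).toReal
        = ∑ p : S × A, g p *
            ∑ p' : S × A, |(Q p.1 p.2 p'.1).toReal - (P p.1 p.2 p'.1).toReal|
              * (po p'.1 p'.2).toReal := by
          simp only [mul_assoc, ← Finset.mul_sum]
      _ = Bf P Q mu ρ0 t := by
          refine Finset.sum_congr rfl fun p _ => ?_
          rw [sum_prod_pol (fun s' => |(Q p.1 p.2 s').toReal - (P p.1 p.2 s').toReal|) po]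
  have T3 : (∑ p' : S × A, ∑ p : S × A,
      g p * (P p.1 p.2 p'.1).toReal * |(po p'.1 p'.2).toReal - (mu p'.1 p'.2).toReal|)
      = Cf P mu po ρ0 (t + 1) := by
    calc ∑ p' : S × A, ∑ p : S × A,
            g p * (P p.1 p.2 p'.1).toReal * |(po p'.1 p'.2).toReal - (mu p'.1 p'.2).toReal|
        = ∑ p' : S × A, (∑ p : S × A, g p * (P p.1 p.2 p'.1).toReal)
            * |(po p'.1 p'.2).toReal - (mu p'.1 p'.2).toReal| := by
          simp only [Finset.sum_mul]
      _ = ∑ p' : S × A, (∑ a : A, dDist P mu ρ0 (t + 1) (p'.1, a))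
            * |(po p'.1 p'.2).toReal - (mu p'.1 p'.2).toReal| := by
          refine Finset.sum_congr rfl fun p' _ => ?_
          rw [dDist_marginal]
      _ = Cf P mu po ρ0 (t + 1) := by
          rw [Fintype.sum_prod_type]
          refine Finset.sum_congr rfl fun s _ => ?_
          dsimp only
          rw [Finset.mul_sum]
  linarith [hE, split.le, T1, T2, T3, split.ge]

lemma summable_geo_mul {γ : ℝ} (hγ0 : 0 ≤ γ) (hγ1 : γ < 1) {u : ℕ → ℝ} {c : ℝ}
    (hc : ∀ t, |u t| ≤ c) : Summable fun t => γ ^ t * u t := by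
  refine Summable.of_norm ?_
  refine Summable.of_nonneg_of_le (fun t => norm_nonneg _) (fun t => ?_)
    ((summable_geometric_of_lt_one hγ0 hγ1).mul_right c)
  rw [norm_mul, norm_pow, Real.norm_eq_abs, Real.norm_eq_abs, abs_of_nonneg hγ0]
  exact mul_le_mul_of_nonneg_left (hc t) (pow_nonneg hγ0 t)

lemma tsum_E_bound {γ : ℝ} (hγ0 : 0 ≤ γ) (hγ1 : γ < 1) (E B C : ℕ → ℝ)
    (hEb : ∀ t, |E t| ≤ 2) (hBb : ∀ t, |B t| ≤ 2) (hCb : ∀ t, |C t| ≤ 2)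
    (hinit : E 0 ≤ C 0) (hrec : ∀ t, E (t + 1) ≤ E t + B t + C (t + 1)) :
    (1 - γ) * ∑' t, γ ^ t * E t ≤ γ * ∑' t, γ ^ t * B t + ∑' t, γ ^ t * C t := by
  have sE : Summable fun t => γ ^ t * E t := summable_geo_mul hγ0 hγ1 hEb
  have sB : Summable fun t => γ ^ t * B t := summable_geo_mul hγ0 hγ1 hBb
  have sC : Summable fun t => γ ^ t * C t := summable_geo_mul hγ0 hγ1 hCb
  have sE' : Summable fun t => γ ^ (t + 1) * E (t + 1) :=
    (summable_nat_add_iff 1).2 sE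
  have sC' : Summable fun t => γ ^ (t + 1) * C (t + 1) :=
    (summable_nat_add_iff 1).2 sC
  have hEsplit : ∑' t, γ ^ t * E t = E 0 + ∑' t, γ ^ (t + 1) * E (t + 1) := by
    simpa using Summable.tsum_eq_zero_add sE
  have hCsplit : ∑' t, γ ^ t * C t = C 0 + ∑' t, γ ^ (t + 1) * C (t + 1) := by
    simpa using Summable.tsum_eq_zero_add sC
  have hle : ∑' t, γ ^ (t + 1) * E (t + 1) ≤
      γ * (∑' t, γ ^ t * E t) + γ * (∑' t, γ ^ t * B t)
        + ∑' t, γ ^ (t + 1) * C (t + 1) := by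
    have h1 : ∀ t, γ ^ (t + 1) * E (t + 1) ≤
        γ * (γ ^ t * E t) + γ * (γ ^ t * B t) + γ ^ (t + 1) * C (t + 1) := by
      intro t
      have h2 : γ ^ (t + 1) * E (t + 1) ≤ γ ^ (t + 1) * (E t + B t + C (t + 1)) :=
        mul_le_mul_of_nonneg_left (hrec t) (pow_nonneg hγ0 _)
      calc γ ^ (t + 1) * E (t + 1) ≤ γ ^ (t + 1) * (E t + B t + C (t + 1)) := h2
        _ = γ * (γ ^ t * E t) + γ * (γ ^ t * B t) + γ ^ (t + 1) * C (t + 1) := by ring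
    calc ∑' t, γ ^ (t + 1) * E (t + 1)
        ≤ ∑' t, (γ * (γ ^ t * E t) + γ * (γ ^ t * B t) + γ ^ (t + 1) * C (t + 1)) :=
          Summable.tsum_le_tsum h1 sE' (((sE.mul_left γ).add (sB.mul_left γ)).add sC')
      _ = γ * (∑' t, γ ^ t * E t) + γ * (∑' t, γ ^ t * B t)
            + ∑' t, γ ^ (t + 1) * C (t + 1) := by
          rw [Summable.tsum_add ((sE.mul_left γ).add (sB.mul_left γ)) sC',
            Summable.tsum_add (sE.mul_left γ) (sB.mul_left γ), tsum_mul_left, tsum_mul_left]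
  linarith

lemma Jret_abs_diff (P Q : S → A → PMF S) (mu po : S → PMF A) (ρ0 : PMF S)
    (r : S → A → ℝ) (rmax : ℝ) (hrmax : 0 ≤ rmax) (hr : ∀ s a, |r s a| ≤ rmax)
    {γ : ℝ} (hγ0 : 0 ≤ γ) (hγ1 : γ < 1) :
    |Jret Q po ρ0 r γ - Jret P mu ρ0 r γ| ≤ rmax * ∑' t, γ ^ t * Ef P Q mu po ρ0 t := by
  have hSbound : ∀ (K : S → A → PMF S) (ν : S → PMF A) (t : ℕ),
      |∑ p : S × A, dDist K ν ρ0 t p * r p.1 p.2| ≤ rmax := by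
    intro K ν t
    calc |∑ p : S × A, dDist K ν ρ0 t p * r p.1 p.2|
        ≤ ∑ p : S × A, |dDist K ν ρ0 t p * r p.1 p.2| := Finset.abs_sum_le_sum_abs _ _
      _ ≤ ∑ p : S × A, dDist K ν ρ0 t p * rmax := by
          refine Finset.sum_le_sum fun p _ => ?_
          rw [abs_mul, abs_of_nonneg (dDist_nonneg K ν ρ0 t p)]
          exact mul_le_mul_of_nonneg_left (hr p.1 p.2) (dDist_nonneg K ν ρ0 t p)
      _ = rmax := by rw [← Finset.sum_mul, dDist_sum_one, one_mul]
  have sQ : Summable fun t => γ ^ t * ∑ p : S × A, dDist Q po ρ0 t p * r p.1 p.2 :=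
    summable_geo_mul hγ0 hγ1 (hSbound Q po)
  have sP : Summable fun t => γ ^ t * ∑ p : S × A, dDist P mu ρ0 t p * r p.1 p.2 :=
    summable_geo_mul hγ0 hγ1 (hSbound P mu)
  have hdiff : Jret Q po ρ0 r γ - Jret P mu ρ0 r γ =
      ∑' t, (γ ^ t * ∑ p : S × A, dDist Q po ρ0 t p * r p.1 p.2
        - γ ^ t * ∑ p : S × A, dDist P mu ρ0 t p * r p.1 p.2) :=
    (Summable.tsum_sub sQ sP).symm
  have hpt : ∀ t, |γ ^ t * ∑ p : S × A, dDist Q po ρ0 t p * r p.1 p.2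
      - γ ^ t * ∑ p : S × A, dDist P mu ρ0 t p * r p.1 p.2| ≤
      rmax * (γ ^ t * Ef P Q mu po ρ0 t) := by
    intro t
    rw [← mul_sub, abs_mul, abs_of_nonneg (pow_nonneg hγ0 t), ← Finset.sum_sub_distrib]
    have h1 : |∑ p : S × A, (dDist Q po ρ0 t p * r p.1 p.2 - dDist P mu ρ0 t p * r p.1 p.2)|
        ≤ rmax * Ef P Q mu po ρ0 t := by
      calc |∑ p : S × A, (dDist Q po ρ0 t p * r p.1 p.2 - dDist P mu ρ0 t p * r p.1 p.2)|
          ≤ ∑ p : S × A, |dDist Q po ρ0 t p * r p.1 p.2 - dDist P mu ρ0 t p * r p.1 p.2| :=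
            Finset.abs_sum_le_sum_abs _ _
        _ ≤ ∑ p : S × A, |dDist Q po ρ0 t p - dDist P mu ρ0 t p| * rmax := by
            refine Finset.sum_le_sum fun p _ => ?_
            rw [← sub_mul, abs_mul]
            exact mul_le_mul_of_nonneg_left (hr p.1 p.2) (abs_nonneg _)
        _ = rmax * Ef P Q mu po ρ0 t := by rw [← Finset.sum_mul, Ef, mul_comm]
    calc γ ^ t * |∑ p : S × A, (dDist Q po ρ0 t p * r p.1 p.2 - dDist P mu ρ0 t p * r p.1 p.2)|
        ≤ γ ^ t * (rmax * Ef P Q mu po ρ0 t) :=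
          mul_le_mul_of_nonneg_left h1 (pow_nonneg hγ0 t)
      _ = rmax * (γ ^ t * Ef P Q mu po ρ0 t) := by ring
  have sEbnd : Summable fun t => rmax * (γ ^ t * Ef P Q mu po ρ0 t) :=
    (summable_geo_mul hγ0 hγ1 (fun t => by
      rw [abs_of_nonneg (Ef_nonneg P Q mu po ρ0 t)]; exact Ef_le_two P Q mu po ρ0 t)).mul_left rmax
  have snorm : Summable fun t => ‖γ ^ t * ∑ p : S × A, dDist Q po ρ0 t p * r p.1 p.2
      - γ ^ t * ∑ p : S × A, dDist P mu ρ0 t p * r p.1 p.2‖ := by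
    refine Summable.of_nonneg_of_le (fun t => norm_nonneg _) (fun t => ?_) sEbnd
    rw [Real.norm_eq_abs]; exact hpt t
  rw [hdiff]
  calc |∑' t, (γ ^ t * ∑ p : S × A, dDist Q po ρ0 t p * r p.1 p.2
        - γ ^ t * ∑ p : S × A, dDist P mu ρ0 t p * r p.1 p.2)|
      ≤ ∑' t, ‖γ ^ t * ∑ p : S × A, dDist Q po ρ0 t p * r p.1 p.2
        - γ ^ t * ∑ p : S × A, dDist P mu ρ0 t p * r p.1 p.2‖ :=
        norm_tsum_le_tsum_norm snorm
    _ ≤ ∑' t, rmax * (γ ^ t * Ef P Q mu po ρ0 t) := by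
        refine Summable.tsum_le_tsum (fun t => ?_) snorm sEbnd
        rw [Real.norm_eq_abs]; exact hpt t
    _ = rmax * ∑' t, γ ^ t * Ef P Q mu po ρ0 t := tsum_mul_left

lemma occ_weighted (P : S → A → PMF S) (mu : S → PMF A) (ρ0 : PMF S) {γ : ℝ}
    (hγ0 : 0 ≤ γ) (hγ1 : γ < 1) (X : S × A → ℝ) :
    ∑ p : S × A, occ P mu ρ0 γ p * X p =
      (1 - γ) * ∑' t, γ ^ t * ∑ p : S × A, dDist P mu ρ0 t p * X p := by
  have hsumm : ∀ p : S × A, Summable fun t => γ ^ t * (dDist P mu ρ0 t p * X p) := by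
    intro p
    refine summable_geo_mul hγ0 hγ1 (c := |X p|) fun t => ?_
    rw [abs_mul, abs_of_nonneg (dDist_nonneg P mu ρ0 t p)]
    have := dDist_le_one P mu ρ0 t p
    exact mul_le_of_le_one_left (abs_nonneg _) this
  calc ∑ p : S × A, occ P mu ρ0 γ p * X p
      = ∑ p : S × A, (1 - γ) * ∑' t, γ ^ t * (dDist P mu ρ0 t p * X p) := by
        refine Finset.sum_congr rfl fun p _ => ?_
        rw [occ, mul_assoc]
        congr 1
        rw [← tsum_mul_right]
        exact tsum_congr fun t => by ring
    _ = (1 - γ) * ∑ p : S × A, ∑' t, γ ^ t * (dDist P mu ρ0 t p * X p) := by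
        rw [← Finset.mul_sum]
    _ = (1 - γ) * ∑' t, ∑ p : S × A, γ ^ t * (dDist P mu ρ0 t p * X p) := by
        rw [Summable.tsum_finsetSum fun p _ => hsumm p]
    _ = (1 - γ) * ∑' t, γ ^ t * ∑ p : S × A, dDist P mu ρ0 t p * X p := by
        congr 1
        exact tsum_congr fun t => by rw [← Finset.mul_sum]

end AuxProof

/-- offline performance bound in total-variation form, corrected
intermediate form of Theorem 4: for kernels `P_src, P_tar` and policies `pol_D, pol`,
`J[P_tar](pol) − J[P_src](pol) ≥ −(4·r_max/(1−γ)²) Σ_s ν[P_src,pol_D](s)·D_TV(pol_D(s), pol(s))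
 − (2γ·r_max/(1−γ)²) Σ_{(s,a)} ρ[P_src,pol_D](s,a)·D_TV(P_src(s,a), P_tar(s,a))`. -/
theorem offline_performance_bound_tv
    {S A : Type*} [Fintype S] [Fintype A] [Nonempty S] [Nonempty A]
    (Psrc Ptar : S → A → PMF S) (polD pol : S → PMF A) (ρ0 : PMF S)
    (r : S → A → ℝ) (rmax : ℝ) (hrmax : 0 ≤ rmax) (hr : ∀ s a, |r s a| ≤ rmax)
    (γ : ℝ) (hγ0 : 0 ≤ γ) (hγ1 : γ < 1) :
    Jret Ptar pol ρ0 r γ - Jret Psrc pol ρ0 r γ ≥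
      -(4 * rmax / (1 - γ) ^ 2) *
        (∑ s : S, stateOcc Psrc polD ρ0 γ s * dTV (polD s) (pol s))
      - (2 * γ * rmax / (1 - γ) ^ 2) *
        ∑ p : S × A, occ Psrc polD ρ0 γ p * dTV (Psrc p.1 p.2) (Ptar p.1 p.2) := by
  have h1γ : (0:ℝ) < 1 - γ := by linarith
  have hEb1 : ∀ t, |Ef Psrc Ptar polD pol ρ0 t| ≤ 2 := fun t => by
    rw [abs_of_nonneg (Ef_nonneg _ _ _ _ _ t)]; exact Ef_le_two _ _ _ _ _ t
  have hEb2 : ∀ t, |Ef Psrc Psrc polD pol ρ0 t| ≤ 2 := fun t => by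
    rw [abs_of_nonneg (Ef_nonneg _ _ _ _ _ t)]; exact Ef_le_two _ _ _ _ _ t
  have hBb : ∀ t, |Bf Psrc Ptar polD ρ0 t| ≤ 2 := fun t => by
    rw [abs_of_nonneg (Bf_nonneg _ _ _ _ t)]; exact Bf_le_two _ _ _ _ t
  have hBb2 : ∀ t, |Bf Psrc Psrc polD ρ0 t| ≤ 2 := fun t => by
    rw [abs_of_nonneg (Bf_nonneg _ _ _ _ t)]; exact Bf_le_two _ _ _ _ t
  have hCb : ∀ t, |Cf Psrc polD pol ρ0 t| ≤ 2 := fun t => by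
    rw [abs_of_nonneg (Cf_nonneg _ _ _ _ t)]; exact Cf_le_two _ _ _ _ t
  set F1 := ∑' t, γ ^ t * Ef Psrc Ptar polD pol ρ0 t with hF1def
  set F2 := ∑' t, γ ^ t * Ef Psrc Psrc polD pol ρ0 t with hF2def
  set Bs := ∑' t, γ ^ t * Bf Psrc Ptar polD ρ0 t with hBsdef
  set Cs := ∑' t, γ ^ t * Cf Psrc polD pol ρ0 t with hCsdef
  have hF1 : (1 - γ) * F1 ≤ γ * Bs + Cs :=
    tsum_E_bound hγ0 hγ1 _ _ _ hEb1 hBb hCb (Ef_zero_eq _ _ _ _ _).le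
      (Ef_succ_le _ _ _ _ _)
  have hF2' : (1 - γ) * F2 ≤
      γ * ∑' t, γ ^ t * Bf Psrc Psrc polD ρ0 t + Cs :=
    tsum_E_bound hγ0 hγ1 _ _ _ hEb2 hBb2 hCb (Ef_zero_eq _ _ _ _ _).le
      (Ef_succ_le _ _ _ _ _)
  have hBzero : ∑' t, γ ^ t * Bf Psrc Psrc polD ρ0 t = 0 := by
    simp [Bf_self]
  have hF2 : (1 - γ) * F2 ≤ Cs := by
    rw [hBzero, mul_zero, zero_add] at hF2'
    exact hF2'
  have hJ1 := Jret_abs_diff Psrc Ptar polD pol ρ0 r rmax hrmax hr hγ0 hγ1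
  have hJ2 := Jret_abs_diff Psrc Psrc polD pol ρ0 r rmax hrmax hr hγ0 hγ1
  have hJ1' : -(rmax * F1) ≤ Jret Ptar pol ρ0 r γ - Jret Psrc polD ρ0 r γ :=
    (abs_le.mp hJ1).1
  have hJ2' : Jret Psrc pol ρ0 r γ - Jret Psrc polD ρ0 r γ ≤ rmax * F2 :=
    (abs_le.mp hJ2).2
  have hJ : -(rmax * F1) - rmax * F2 ≤ Jret Ptar pol ρ0 r γ - Jret Psrc pol ρ0 r γ := by
    linarith
  have hBlink : ∑ p : S × A, occ Psrc polD ρ0 γ p * dTV (Psrc p.1 p.2) (Ptar p.1 p.2)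
      = (1 - γ) * ((1/2) * Bs) := by
    rw [hBsdef, occ_weighted Psrc polD ρ0 hγ0 hγ1]
    congr 1
    rw [← tsum_mul_left]
    refine tsum_congr fun t => ?_
    have h : ∑ p : S × A, dDist Psrc polD ρ0 t p * dTV (Psrc p.1 p.2) (Ptar p.1 p.2)
        = (1/2) * Bf Psrc Ptar polD ρ0 t := by
      rw [Bf, Finset.mul_sum]
      refine Finset.sum_congr rfl fun p _ => ?_
      rw [dTV]
      have habs : ∑ s' : S, |(Psrc p.1 p.2 s').toReal - (Ptar p.1 p.2 s').toReal|
          = ∑ s' : S, |(Ptar p.1 p.2 s').toReal - (Psrc p.1 p.2 s').toReal| :=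
        Finset.sum_congr rfl fun s' _ => abs_sub_comm _ _
      rw [habs]; ring
    rw [h]; ring
  have hClink : ∑ s : S, stateOcc Psrc polD ρ0 γ s * dTV (polD s) (pol s)
      = (1 - γ) * ((1/2) * Cs) := by
    have hX : ∑ s : S, stateOcc Psrc polD ρ0 γ s * dTV (polD s) (pol s)
        = ∑ p : S × A, occ Psrc polD ρ0 γ p * dTV (polD p.1) (pol p.1) := by
      rw [Fintype.sum_prod_type]
      refine Finset.sum_congr rfl fun s _ => ?_
      dsimp only
      rw [stateOcc, Finset.sum_mul]
    rw [hX, hCsdef, occ_weighted Psrc polD ρ0 hγ0 hγ1]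
    congr 1
    rw [← tsum_mul_left]
    refine tsum_congr fun t => ?_
    have h : ∑ p : S × A, dDist Psrc polD ρ0 t p * dTV (polD p.1) (pol p.1)
        = (1/2) * Cf Psrc polD pol ρ0 t := by
      rw [Cf, Finset.mul_sum, Fintype.sum_prod_type]
      refine Finset.sum_congr rfl fun s _ => ?_
      dsimp only
      rw [← Finset.sum_mul, dTV]
      have habs : ∑ a' : A, |(polD s a').toReal - (pol s a').toReal|
          = ∑ a' : A, |(pol s a').toReal - (polD s a').toReal| :=
        Finset.sum_congr rfl fun a' _ => abs_sub_comm _ _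
      rw [habs]; ring
    rw [h]; ring
  rw [ge_iff_le, hBlink, hClink]
  have key : -(2 * rmax * Cs + γ * rmax * Bs) ≤
      (Jret Ptar pol ρ0 r γ - Jret Psrc pol ρ0 r γ) * (1 - γ) := by
    have m1 : (-(rmax * F1) - rmax * F2) * (1 - γ) ≤
        (Jret Ptar pol ρ0 r γ - Jret Psrc pol ρ0 r γ) * (1 - γ) :=
      mul_le_mul_of_nonneg_right hJ h1γ.le
    have m2 : rmax * ((1 - γ) * F1) ≤ rmax * (γ * Bs + Cs) :=
      mul_le_mul_of_nonneg_left hF1 hrmax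
    have m3 : rmax * ((1 - γ) * F2) ≤ rmax * Cs :=
      mul_le_mul_of_nonneg_left hF2 hrmax
    nlinarith [m1, m2, m3]
  have heq : -(4 * rmax / (1 - γ) ^ 2) * ((1 - γ) * (1/2 * Cs))
      - 2 * γ * rmax / (1 - γ) ^ 2 * ((1 - γ) * (1/2 * Bs))
      = (-(2 * rmax * Cs + γ * rmax * Bs)) / (1 - γ) := by
    field_simp
    ring
  rw [heq, div_le_iff₀ h1γ]
  exact key
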